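/- Let m > 0 be a real number and define f : (−∞, m) → ℝ by f(x) = (1 − x/m)^(−m) − 1, where the power is the real power function (rpow) with positive base 1 − x/m. Then for all real x, y with x < m, y < m and x + y < m, setting w = m·((x/m)/(1 − x/m))·((y/m)/(1 − y/m)) (which satisfies w < m), one has the functional equation f(x+y) = f(x) + f(y) + f(x)·f(y) + f(w) + f(w)·( f(x) + f(y) + f(x)·f(y) ). In particular this holds for m = 2^(n−1) for every natural number n ≥ 1, i.e. for the functions f_n(x) = (1 − x/2^(n−1))^(−2^(n−1)) − 1. -/

import Mathlib

/-- For `m > 0`, the function `f x = (1 - x/m) ^ (-m) - 1` (real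
power with positive base) satisfies, for `x < m`, `y < m`, `x + y < m` and
`w = m * ((x/m)/(1 - x/m)) * ((y/m)/(1 - y/m))` (which satisfies `w < m`), the
functional equation
`f (x+y) = f x + f y + f x * f y + f w + f w * (f x + f y + f x * f y)`.
In particular this applies to `m = 2 ^ (n - 1)`, giving the functions `f_n`. -/
theorem fn_functional_equation (m : ℝ) (hm : 0 < m) (f : ℝ → ℝ)
    (hf : ∀ x : ℝ, f x = (1 - x / m) ^ (-m) - 1)
    (x y : ℝ) (hx : x < m) (hy : y < m) (hxy : x + y < m) :
    m * ((x / m) / (1 - x / m)) * ((y / m) / (1 - y / m)) < m ∧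
    f (x + y) = f x + f y + f x * f y +
      f (m * ((x / m) / (1 - x / m)) * ((y / m) / (1 - y / m))) +
      f (m * ((x / m) / (1 - x / m)) * ((y / m) / (1 - y / m))) *
        (f x + f y + f x * f y) := by
  set w : ℝ := m * ((x / m) / (1 - x / m)) * ((y / m) / (1 - y / m)) with hw
  have ha : (0:ℝ) < 1 - x / m := by
    have : x / m < 1 := (div_lt_one hm).mpr hx
    linarith
  have hb : (0:ℝ) < 1 - y / m := by
    have : y / m < 1 := (div_lt_one hm).mpr hy
    linarith
  have hc : (0:ℝ) < 1 - (x + y) / m := by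
    have : (x + y) / m < 1 := (div_lt_one hm).mpr hxy
    linarith
  have hm' : m ≠ 0 := ne_of_gt hm
  have ha' : (1 - x / m) ≠ 0 := ha.ne'
  have hb' : (1 - y / m) ≠ 0 := hb.ne'
  have hmx : m - x ≠ 0 := (sub_pos.mpr hx).ne'
  have hmy : m - y ≠ 0 := (sub_pos.mpr hy).ne'
  have key : 1 - w / m = (1 - (x + y) / m) / ((1 - x / m) * (1 - y / m)) := by
    rw [hw]
    field_simp [hm', ha', hb', hmx, hmy]
    ring
  have hwpos : (0:ℝ) < 1 - w / m := by
    rw [key]; positivity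
  have hwm : w < m := by
    have : w / m < 1 := by linarith
    calc w = (w / m) * m := by field_simp
    _ < 1 * m := by exact mul_lt_mul_of_pos_right this hm
    _ = m := by ring
  refine ⟨hwm, ?_⟩
  rw [hf, hf, hf, hf]
  have hC : 1 - (x + y) / m = (1 - x / m) * (1 - y / m) * (1 - w / m) := by
    rw [key]; field_simp [ha', hb', hmx, hmy]
  rw [hC, key]
  rw [Real.mul_rpow (by positivity) (by positivity),
    Real.mul_rpow (by positivity) (by positivity),
    Real.div_rpow (le_of_lt hc) (by positivity),
    Real.mul_rpow (by positivity) (by positivity)]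
  have hp : (1 - x / m) ^ (-m) ≠ 0 := by positivity
  have hq : (1 - y / m) ^ (-m) ≠ 0 := by positivity
  field_simp
  ring
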